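/- Fix an integer k ≥ 1 and let φ_k^min = arccos(1 − (2 − 2cos(π/(2k+1)))/(1 − cos(π/(2k−1)))). If φ₁, φ₂ are phases with φ_k^min < φ₂ < φ₁ ≤ π, then there exists λ with λ_{k,1}^{φ₁,max} < λ < λ_{k,1}^{φ₂,max} such that P_k^{φ₁}(λ) = P_k^{φ₂}(λ), where λ_{k,1}^{φ,max} = (1 − cos(π/(2k+1)))/(1 − cos φ). -/

import Mathlib

/-- The success probability `P_k^φ(λ)` of the matched-phase Grover algorithm after
`k` iterations: `P_k^φ(λ) = A·cos((2k+1)δ) + B` where `θ = arcsin √λ`,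
`δ = arccos (1 − λ(1 − cos φ))`, `A = (sin²θ/sin²δ)(cos φ − cos δ)` and
`B = (sin²θ/sin²δ)(1 − cos φ·cos δ)`. -/
noncomputable def grovP (k : ℕ) (φ lam : ℝ) : ℝ :=
  let θ : ℝ := Real.arcsin (Real.sqrt lam)
  let δ : ℝ := Real.arccos (1 - lam * (1 - Real.cos φ))
  let A : ℝ := Real.sin θ ^ 2 / Real.sin δ ^ 2 * (Real.cos φ - Real.cos δ)
  let B : ℝ := Real.sin θ ^ 2 / Real.sin δ ^ 2 * (1 - Real.cos φ * Real.cos δ)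
  A * Real.cos ((2 * (k : ℝ) + 1) * δ) + B

/-- `φ_k^min = arccos(1 − (2 − 2cos(π/(2k+1)))/(1 − cos(π/(2k−1))))`. -/
noncomputable def phiMin (k : ℕ) : ℝ :=
  Real.arccos (1 - (2 - 2 * Real.cos (Real.pi / (2 * (k : ℝ) + 1))) /
    (1 - Real.cos (Real.pi / (2 * (k : ℝ) - 1))))

noncomputable def gaux (k : ℕ) (φ lam : ℝ) : ℝ :=
  1 - (1 - lam) * (1 + Real.cos ((2 * (k : ℝ) + 1) *
    Real.arccos (1 - lam * (1 - Real.cos φ)))) / (2 - lam * (1 - Real.cos φ))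

lemma gaux_eq_one (k : ℕ) (φ lam : ℝ)
    (h : Real.cos ((2 * (k : ℝ) + 1) * Real.arccos (1 - lam * (1 - Real.cos φ))) = -1) :
    gaux k φ lam = 1 := by
  unfold gaux; rw [h]; ring

lemma gaux_lt_one (k : ℕ) (φ lam : ℝ) (hlam : lam < 1)
    (hx : -1 < 1 - lam * (1 - Real.cos φ))
    (hc : -1 < Real.cos ((2 * (k : ℝ) + 1) * Real.arccos (1 - lam * (1 - Real.cos φ)))) :
    gaux k φ lam < 1 := by
  unfold gaux
  have hnum : 0 < (1 - lam) * (1 + Real.cos ((2 * (k : ℝ) + 1) *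
      Real.arccos (1 - lam * (1 - Real.cos φ)))) := mul_pos (by linarith) (by linarith)
  have hden : 0 < 2 - lam * (1 - Real.cos φ) := by linarith
  have := div_pos hnum hden
  linarith

lemma gaux_continuousOn (k : ℕ) (φ : ℝ) (s : Set ℝ)
    (h : ∀ lam ∈ s, 2 - lam * (1 - Real.cos φ) ≠ 0) :
    ContinuousOn (gaux k φ) s := by
  unfold gaux
  apply ContinuousOn.sub continuousOn_const
  refine ContinuousOn.div ?_ ?_ h
  · exact Continuous.continuousOn (by
      exact ((continuous_const.sub continuous_id).mul (continuous_const.add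
        (Real.continuous_cos.comp (continuous_const.mul (Real.continuous_arccos.comp
          (continuous_const.sub (continuous_id.mul continuous_const))))))))
  · exact Continuous.continuousOn
      (continuous_const.sub (continuous_id.mul continuous_const))

lemma grovP_eq (k : ℕ) (φ lam : ℝ) (h0 : 0 < lam) (h1 : lam < 1) (hφ : Real.cos φ < 1) :
    grovP k φ lam = gaux k φ lam := by
  unfold gaux
  have hc1 : 0 < 1 - Real.cos φ := by linarith
  have hc2 : 1 - Real.cos φ ≤ 2 := by nlinarith [Real.neg_one_le_cos φ]
  set x : ℝ := 1 - lam * (1 - Real.cos φ) with hx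
  have hx1 : x < 1 := by nlinarith
  have hxm1 : -1 < x := by nlinarith
  have hsθ : Real.sin (Real.arcsin (Real.sqrt lam)) ^ 2 = lam := by
    rw [Real.sin_arcsin (by linarith [Real.sqrt_nonneg lam]) (Real.sqrt_le_one.mpr h1.le),
      Real.sq_sqrt h0.le]
  have hcδ : Real.cos (Real.arccos x) = x := Real.cos_arccos hxm1.le hx1.le
  have hsδ : Real.sin (Real.arccos x) ^ 2 = (1 - x) * (1 + x) := by
    rw [Real.sin_arccos, Real.sq_sqrt (by nlinarith)]; ring
  have h1x : 1 - x = lam * (1 - Real.cos φ) := by rw [hx]; ring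
  show Real.sin (Real.arcsin (Real.sqrt lam)) ^ 2 / Real.sin (Real.arccos x) ^ 2 *
      (Real.cos φ - Real.cos (Real.arccos x)) * Real.cos ((2 * (k : ℝ) + 1) * Real.arccos x) +
    Real.sin (Real.arcsin (Real.sqrt lam)) ^ 2 / Real.sin (Real.arccos x) ^ 2 *
      (1 - Real.cos φ * Real.cos (Real.arccos x)) = _
  rw [hsθ, hcδ, hsδ, h1x]
  have h2x : 2 - lam * (1 - Real.cos φ) = 1 + x := by rw [hx]; ring
  rw [h2x]
  have hne1 : lam * (1 - Real.cos φ) ≠ 0 := by positivity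
  have hne2 : (1 : ℝ) + x ≠ 0 := by linarith
  field_simp
  ring_nf
  rw [hx]; ring

set_option maxHeartbeats 2000000 in
/-- For k ≥ 1 and phases φ₁, φ₂ with φ_k^min < φ₂ < φ₁ ≤ π, there
exists λ with λ_{k,1}^{φ₁,max} < λ < λ_{k,1}^{φ₂,max} such that
P_k^{φ₁}(λ) = P_k^{φ₂}(λ), where λ_{k,1}^{φ,max} = (1 − cos(π/(2k+1)))/(1 − cos φ). -/
theorem intersection_point_of_two_phases
    (k : ℕ) (hk : 1 ≤ k) (φ₁ φ₂ : ℝ)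
    (h₁ : phiMin k < φ₂) (h₂ : φ₂ < φ₁) (h₃ : φ₁ ≤ Real.pi) :
    ∃ lam : ℝ,
      (1 - Real.cos (Real.pi / (2 * (k : ℝ) + 1))) / (1 - Real.cos φ₁) < lam ∧
      lam < (1 - Real.cos (Real.pi / (2 * (k : ℝ) + 1))) / (1 - Real.cos φ₂) ∧
      grovP k φ₁ lam = grovP k φ₂ lam := by
  have hk1 : (1 : ℝ) ≤ (k : ℝ) := by exact_mod_cast hk
  have hπ := Real.pi_pos
  obtain ⟨α, hαdef⟩ : ∃ x : ℝ, x = Real.pi / (2 * (k : ℝ) + 1) := ⟨_, rfl⟩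
  obtain ⟨β, hβdef⟩ : ∃ x : ℝ, x = Real.pi / (2 * (k : ℝ) - 1) := ⟨_, rfl⟩
  rw [← hαdef]
  have hd1 : (0 : ℝ) < 2 * (k : ℝ) + 1 := by linarith
  have hd2 : (0 : ℝ) < 2 * (k : ℝ) - 1 := by linarith
  have hα0 : 0 < α := by rw [hαdef]; exact div_pos hπ hd1
  have hαπ : α < Real.pi := by
    rw [hαdef, div_lt_iff₀ hd1]
    have := mul_pos hπ (show (0:ℝ) < 2 * (k:ℝ) by linarith)
    linarith
  have hβ0 : 0 < β := by rw [hβdef]; exact div_pos hπ hd2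
  have hβπ : β ≤ Real.pi := by
    rw [hβdef, div_le_iff₀ hd2]
    have := mul_nonneg hπ.le (show (0:ℝ) ≤ 2 * (k:ℝ) - 2 by linarith)
    linarith
  have hαβ : α ≤ β := by
    rw [hαdef, hβdef]; apply div_le_div_of_nonneg_left hπ.le hd2; linarith
  have hcosα_lt : Real.cos α < 1 := by
    have := Real.cos_lt_cos_of_nonneg_of_le_pi le_rfl hαπ.le hα0
    rwa [Real.cos_zero] at this
  have hcosβ_lt : Real.cos β < 1 := by
    have h : β ≤ Real.pi := hβπ
    have := Real.cos_lt_cos_of_nonneg_of_le_pi le_rfl h hβ0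
    rwa [Real.cos_zero] at this
  have hcosβα : Real.cos β ≤ Real.cos α :=
    Real.cos_le_cos_of_nonneg_of_le_pi hα0.le hβπ hαβ
  have hcosβm1 : -1 ≤ Real.cos β := Real.neg_one_le_cos β
  have hcosαm1 : -1 ≤ Real.cos α := Real.neg_one_le_cos α
  -- facts about phiMin
  obtain ⟨arg, hargdef⟩ : ∃ x : ℝ, x = 1 - (2 - 2 * Real.cos α) / (1 - Real.cos β) :=
    ⟨_, rfl⟩
  have h1cβ : 0 < 1 - Real.cos β := by linarith
  have h1cα : 0 < 1 - Real.cos α := by linarith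
  have harg_lt1 : arg < 1 := by
    rw [hargdef]
    have : 0 < (2 - 2 * Real.cos α) / (1 - Real.cos β) :=
      div_pos (by linarith) h1cβ
    linarith
  have harg_ge : -1 ≤ arg := by
    rw [hargdef]
    have h : (2 - 2 * Real.cos α) / (1 - Real.cos β) ≤ 2 := by
      rw [div_le_iff₀ h1cβ]; linarith
    linarith
  have harg_le : arg ≤ Real.cos α := by
    rw [hargdef]
    have h : (2 - 2 * Real.cos α) / (1 - Real.cos β) ≥ 1 - Real.cos α := by
      rw [ge_iff_le, le_div_iff₀ h1cβ]
      have := mul_nonneg h1cα.le (show (0:ℝ) ≤ 1 + Real.cos β by linarith)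
      nlinarith [this]
    linarith
  have hphiMin : phiMin k = Real.arccos arg := by
    rw [hargdef, hαdef, hβdef]; rfl
  have hphiMin_ge : α ≤ phiMin k := by
    rw [hphiMin]
    calc α = Real.arccos (Real.cos α) := (Real.arccos_cos hα0.le hαπ.le).symm
    _ ≤ Real.arccos arg := by
        exact (Real.strictAntiOn_arccos.le_iff_ge ⟨hcosαm1, Real.cos_le_one α⟩
          ⟨harg_ge, harg_lt1.le⟩).mpr harg_le
  have hφ₂0 : 0 < φ₂ := lt_of_lt_of_le hα0 (le_of_lt (lt_of_le_of_lt hphiMin_ge h₁))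
  have hφ₂α : α < φ₂ := lt_of_le_of_lt hphiMin_ge h₁
  have hφ₂π : φ₂ ≤ Real.pi := le_of_lt (lt_of_lt_of_le h₂ h₃)
  have hcφ₂α : Real.cos φ₂ < Real.cos α :=
    Real.cos_lt_cos_of_nonneg_of_le_pi hα0.le hφ₂π hφ₂α
  have hcφ₁₂ : Real.cos φ₁ < Real.cos φ₂ :=
    Real.cos_lt_cos_of_nonneg_of_le_pi hφ₂0.le h₃ h₂
  have hcφ₂1 : Real.cos φ₂ < 1 := lt_of_lt_of_le hcφ₂α (Real.cos_le_one α)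
  have hcφ₁1 : Real.cos φ₁ < 1 := lt_trans hcφ₁₂ hcφ₂1
  have h1cφ₁ : 0 < 1 - Real.cos φ₁ := by linarith
  have h1cφ₂ : 0 < 1 - Real.cos φ₂ := by linarith
  have h1cφ₁2 : 1 - Real.cos φ₁ ≤ 2 := by linarith [Real.neg_one_le_cos φ₁]
  have h1cφ₂2 : 1 - Real.cos φ₂ ≤ 2 := by linarith [Real.neg_one_le_cos φ₂]
  -- cos phiMin = arg, key strict inequality
  have hcosphiMin : Real.cos (phiMin k) = arg := by
    rw [hphiMin]; exact Real.cos_arccos harg_ge harg_lt1.le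
  have hcφ₂arg : Real.cos φ₂ < arg := by
    rw [← hcosphiMin]
    exact Real.cos_lt_cos_of_nonneg_of_le_pi (Real.arccos_nonneg _) hφ₂π h₁
  have hkey₂ : (2 - 2 * Real.cos α) / (1 - Real.cos β) < 1 - Real.cos φ₂ := by
    rw [hargdef] at hcφ₂arg; linarith
  -- the endpoints
  obtain ⟨a, hadef⟩ : ∃ x : ℝ, x = (1 - Real.cos α) / (1 - Real.cos φ₁) := ⟨_, rfl⟩
  obtain ⟨b, hbdef⟩ : ∃ x : ℝ, x = (1 - Real.cos α) / (1 - Real.cos φ₂) := ⟨_, rfl⟩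
  rw [← hadef, ← hbdef]
  have ha0 : 0 < a := by rw [hadef]; exact div_pos h1cα h1cφ₁
  have hb0 : 0 < b := by rw [hbdef]; exact div_pos h1cα h1cφ₂
  have hab : a < b := by
    rw [hadef, hbdef]
    exact div_lt_div_of_pos_left h1cα h1cφ₂ (by linarith)
  have hb1 : b < 1 := by
    rw [hbdef, div_lt_one h1cφ₂]; linarith
  have ha1 : a < 1 := lt_trans hab hb1
  -- x at a for φ₁ is cos α
  have hxa1 : 1 - a * (1 - Real.cos φ₁) = Real.cos α := by
    rw [hadef, div_mul_cancel₀ _ h1cφ₁.ne']; ring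
  have hxb2 : 1 - b * (1 - Real.cos φ₂) = Real.cos α := by
    rw [hbdef, div_mul_cancel₀ _ h1cφ₂.ne']; ring
  have hαarccos : Real.arccos (Real.cos α) = α := Real.arccos_cos hα0.le hαπ.le
  have h2k1α : (2 * (k : ℝ) + 1) * α = Real.pi := by
    rw [hαdef, mul_div_cancel₀ _ hd1.ne']
  -- x at a for φ₂
  have hxa2_gt : Real.cos α < 1 - a * (1 - Real.cos φ₂) := by
    have : a * (1 - Real.cos φ₂) < a * (1 - Real.cos φ₁) := by
      apply mul_lt_mul_of_pos_left (by linarith) ha0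
    linarith [hxa1]
  have hxa2_lt : 1 - a * (1 - Real.cos φ₂) < 1 := by
    have := mul_pos ha0 h1cφ₂; linarith
  -- x at b for φ₁
  have hxb1_lt : 1 - b * (1 - Real.cos φ₁) < Real.cos α := by
    have : b * (1 - Real.cos φ₂) < b * (1 - Real.cos φ₁) := by
      apply mul_lt_mul_of_pos_left (by linarith) hb0
    linarith [hxb2]
  have hbb : b * (1 - Real.cos φ₂) = 1 - Real.cos α := by linarith [hxb2]
  have hxb1_gt : Real.cos β < 1 - b * (1 - Real.cos φ₁) := by
    have hkey₂' : 2 - 2 * Real.cos α < (1 - Real.cos φ₂) * (1 - Real.cos β) := by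
      rw [div_lt_iff₀ h1cβ] at hkey₂; linarith
    have hb2 : 2 * b < 1 - Real.cos β := by
      have h' : 2 * b * (1 - Real.cos φ₂) < (1 - Real.cos β) * (1 - Real.cos φ₂) := by
        rw [mul_assoc, hbb]; linarith
      exact (mul_lt_mul_iff_left₀ h1cφ₂).mp h'
    have h'' : b * (1 - Real.cos φ₁) ≤ b * 2 :=
      mul_le_mul_of_nonneg_left h1cφ₁2 hb0.le
    linarith
  -- endpoint value facts via gaux
  have hg1a : gaux k φ₁ a = 1 := by
    apply gaux_eq_one
    rw [hxa1, hαarccos, h2k1α, Real.cos_pi]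
  have hg2b : gaux k φ₂ b = 1 := by
    apply gaux_eq_one
    rw [hxb2, hαarccos, h2k1α, Real.cos_pi]
  -- cos((2k+1)·arccos(x)) > -1 at the cross points
  have hca2 : -1 < Real.cos ((2 * (k : ℝ) + 1) *
      Real.arccos (1 - a * (1 - Real.cos φ₂))) := by
    obtain ⟨t, htdef⟩ : ∃ x : ℝ,
      x = (2 * (k : ℝ) + 1) * Real.arccos (1 - a * (1 - Real.cos φ₂)) := ⟨_, rfl⟩
    rw [← htdef]
    have hδlt : Real.arccos (1 - a * (1 - Real.cos φ₂)) < α := by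
      rw [← hαarccos]
      exact Real.strictAntiOn_arccos ⟨hcosαm1, Real.cos_le_one α⟩
        ⟨by linarith, hxa2_lt.le⟩ hxa2_gt
    have ht0 : 0 ≤ t := by
      rw [htdef]
      exact mul_nonneg hd1.le (Real.arccos_nonneg _)
    have htπ : t < Real.pi := by
      rw [htdef, ← h2k1α]
      exact mul_lt_mul_of_pos_left hδlt hd1
    calc (-1 : ℝ) = Real.cos Real.pi := Real.cos_pi.symm
    _ < Real.cos t := Real.cos_lt_cos_of_nonneg_of_le_pi ht0 le_rfl htπ
  have hcb1 : -1 < Real.cos ((2 * (k : ℝ) + 1) *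
      Real.arccos (1 - b * (1 - Real.cos φ₁))) := by
    obtain ⟨t, htdef⟩ : ∃ x : ℝ,
      x = (2 * (k : ℝ) + 1) * Real.arccos (1 - b * (1 - Real.cos φ₁)) := ⟨_, rfl⟩
    rw [← htdef]
    have hβarccos : Real.arccos (Real.cos β) = β := Real.arccos_cos hβ0.le hβπ
    have hδgt : α < Real.arccos (1 - b * (1 - Real.cos φ₁)) := by
      rw [← hαarccos]
      exact Real.strictAntiOn_arccos ⟨by linarith, by linarith⟩
        ⟨hcosαm1, Real.cos_le_one α⟩ hxb1_lt
    have hδlt : Real.arccos (1 - b * (1 - Real.cos φ₁)) < β := by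
      rw [← hβarccos]
      exact Real.strictAntiOn_arccos ⟨hcosβm1, Real.cos_le_one β⟩
        ⟨by linarith, by linarith⟩ hxb1_gt
    have htgt : Real.pi < t := by
      rw [htdef, ← h2k1α]
      exact mul_lt_mul_of_pos_left hδgt hd1
    have htlt : t < 3 * Real.pi := by
      have h1 : t < (2 * (k : ℝ) + 1) * β := by
        rw [htdef]; exact mul_lt_mul_of_pos_left hδlt hd1
      have h2 : (2 * (k : ℝ) + 1) * β ≤ 3 * Real.pi := by
        rw [hβdef, mul_div_assoc', div_le_iff₀ hd2]
        have := mul_nonneg hπ.le (show (0:ℝ) ≤ 4 * (k:ℝ) - 4 by linarith)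
        linarith
      linarith
    have hcc : Real.cos t = Real.cos (t - 2 * Real.pi) := (Real.cos_sub_two_pi t).symm
    rw [hcc, ← Real.cos_abs (t - 2 * Real.pi)]
    have habs : |t - 2 * Real.pi| < Real.pi := by
      rw [abs_lt]; constructor <;> linarith
    calc (-1 : ℝ) = Real.cos Real.pi := Real.cos_pi.symm
    _ < Real.cos |t - 2 * Real.pi| :=
        Real.cos_lt_cos_of_nonneg_of_le_pi (abs_nonneg _) le_rfl habs
  have hg2a : gaux k φ₂ a < 1 := gaux_lt_one k φ₂ a ha1 (by linarith) hca2
  have hg1b : gaux k φ₁ b < 1 := gaux_lt_one k φ₁ b hb1 (by linarith) hcb1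
  -- IVT on F = gaux φ₁ - gaux φ₂
  have hcont : ∀ φ : ℝ, Real.cos φ < 1 → ContinuousOn (gaux k φ) (Set.Icc a b) := by
    intro φ hφ
    apply gaux_continuousOn
    intro lam hlam
    have h1 : 0 < 1 - Real.cos φ := by linarith
    have h2 : 1 - Real.cos φ ≤ 2 := by linarith [Real.neg_one_le_cos φ]
    have h3 : lam < 1 := lt_of_le_of_lt hlam.2 hb1
    have h4 : 0 < lam := lt_of_lt_of_le ha0 hlam.1
    have h5 : lam * (1 - Real.cos φ) < 2 := by
      have := mul_le_mul_of_nonneg_left h2 h4.le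
      linarith
    intro h
    have : lam * (1 - Real.cos φ) = 2 := by linarith [sub_eq_zero.mp h]
    linarith
  have hcontF : ContinuousOn (fun lam => gaux k φ₁ lam - gaux k φ₂ lam) (Set.Icc a b) :=
    (hcont φ₁ hcφ₁1).sub (hcont φ₂ hcφ₂1)
  have hFa : (0 : ℝ) < gaux k φ₁ a - gaux k φ₂ a := by linarith
  have hFb : gaux k φ₁ b - gaux k φ₂ b < 0 := by linarith
  obtain ⟨c, hc, hFc⟩ := intermediate_value_Ioo' hab.le hcontF
    (Set.mem_Ioo.mpr ⟨hFb, hFa⟩)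
  refine ⟨c, hc.1, hc.2, ?_⟩
  have hc0 : 0 < c := lt_trans ha0 hc.1
  have hc1 : c < 1 := lt_trans hc.2 hb1
  rw [grovP_eq k φ₁ c hc0 hc1 hcφ₁1, grovP_eq k φ₂ c hc0 hc1 hcφ₂1]
  have : gaux k φ₁ c - gaux k φ₂ c = 0 := hFc
  linarith
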